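/- Let α ∈ ℝ, let y : ℝ → ℝ, and let t₀ ∈ ℝ with y(t₀) + t₀² ≠ 0. Suppose y has derivative (2·y(t₀) + 2α)/(y(t₀) + t₀²) at t₀ — that is, y solves the AIR equation with parameters s₂ = 0, s₁ = 0, s₀ = 1, r₂ = 1, r₁ = 0, r₀ = 0, a₃ = 0, a₂ = 0, a₁ = −2, a₀ = −2α. Define u(t) = −1/(y(t) + t²). Then u has derivative 2(t₀² − α)·u(t₀)³ + 2(t₀ + 1)·u(t₀)² at t₀. Hence Liouville's parameterized Class B equation y' = 2(x² − α)y³ + 2(x + 1)y² is a member of the AIR class. -/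

import Mathlib

/-- Liouville's parameterized Class B equation `y' = 2(x² − α)y³ + 2(x + 1)y²`
is a member of the AIR class: it is obtained from the AIR equation with parameters
`s₂ = 0, s₁ = 0, s₀ = 1, r₂ = 1, r₁ = 0, r₀ = 0, a₃ = 0, a₂ = 0, a₁ = −2, a₀ = −2α`
by the change of variables `{x = t, y = −1/u − t²}`, i.e. `u = −1/(y + t²)`. -/
theorem classB_member_of_AIR
    (α : ℝ) (y : ℝ → ℝ) (t₀ : ℝ)
    (hden : y t₀ + t₀ ^ 2 ≠ 0)
    (hy : HasDerivAt y ((2 * y t₀ + 2 * α) / (y t₀ + t₀ ^ 2)) t₀)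
    (u : ℝ → ℝ) (hu : u = fun t => -1 / (y t + t ^ 2)) :
    HasDerivAt u
      (2 * (t₀ ^ 2 - α) * (u t₀) ^ 3 + 2 * (t₀ + 1) * (u t₀) ^ 2) t₀ := by
  subst hu
  have hv : HasDerivAt (fun t => y t + t ^ 2)
      ((2 * y t₀ + 2 * α) / (y t₀ + t₀ ^ 2) + 2 * t₀) t₀ := by
    have := hy.add ((hasDerivAt_pow 2 t₀))
    simp at this
    exact this
  have h := (hv.inv hden).neg
  have heq : -(-((2 * y t₀ + 2 * α) / (y t₀ + t₀ ^ 2) + 2 * t₀) / (y t₀ + t₀ ^ 2) ^ 2)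
      = 2 * (t₀ ^ 2 - α) * ((fun t => -1 / (y t + t ^ 2)) t₀) ^ 3
        + 2 * (t₀ + 1) * ((fun t => -1 / (y t + t ^ 2)) t₀) ^ 2 := by
    simp only
    field_simp
    ring
  rw [← heq]
  have hf : (fun t => -1 / (y t + t ^ 2)) = -(fun t => y t + t ^ 2)⁻¹ := by
    funext t
    simp [one_div, neg_div]
  rw [hf]
  exact h
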